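/- For q ≥ 1, the number of q-decreasing words of length n with exactly k ones is the coefficient of x^n y^k in W_q(x,y) = (1 − x^{q+1} y^q) / (1 − xy − x + x^{q+2} y^{q+1}). -/

import Mathlib

/-- A binary word (`List Bool`, `true` = bit 1) is `q`-decreasing if it is a
concatenation `1^{b0} ++ 0^{a1}1^{b1} ++ ... ++ 0^{am}1^{bm}` where every
block `0^a 1^b` with `a > 0` satisfies `q*a > b` (equivalently, every maximal
factor of the form `0^a 1^b` with `a > 0` satisfies `q*a > b`). -/
inductive QDecreasing (q : ℕ) : List Bool → Prop where
  | ones (m : ℕ) : QDecreasing q (List.replicate m true)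
  | snoc (w : List Bool) (a b : ℕ) (ha : 0 < a) (hb : b < q * a)
      (hw : QDecreasing q w) :
      QDecreasing q (w ++ List.replicate a false ++ List.replicate b true)

/-- The bivariate formal power series over `ℤ` with coefficient `c n k`
on `x^n y^k`. -/
noncomputable def mkSeries (c : ℕ → ℕ → ℤ) : MvPowerSeries (Fin 2) ℤ :=
  fun d => c (d 0) (d 1)

noncomputable def Xv : MvPowerSeries (Fin 2) ℤ := MvPowerSeries.X 0
noncomputable def Yv : MvPowerSeries (Fin 2) ℤ := MvPowerSeries.X 1

namespace QDecAux

open List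

def tOnes (w : List Bool) : ℕ := (w.reverse.takeWhile id).length
def zrest (w : List Bool) : List Bool := w.reverse.dropWhile id
def zZeros (w : List Bool) : ℕ := ((zrest w).takeWhile (fun x => !x)).length
def core (w : List Bool) : List Bool := ((zrest w).dropWhile (fun x => !x)).reverse

lemma tw_rep_append (p : Bool → Bool) (c : Bool) (hp : p c = true) (n : ℕ) (r : List Bool) :
    (replicate n c ++ r).takeWhile p = replicate n c ++ r.takeWhile p := by
  induction n with
  | zero => simp
  | succ n ih => simp [replicate_succ, takeWhile_cons, hp, ih]

lemma dw_rep_append (p : Bool → Bool) (c : Bool) (hp : p c = true) (n : ℕ) (r : List Bool) :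
    (replicate n c ++ r).dropWhile p = r.dropWhile p := by
  induction n with
  | zero => simp
  | succ n ih => simp [replicate_succ, dropWhile_cons, hp, ih]

lemma tw_nil (p : Bool → Bool) (r : List Bool) (h : ∀ x, r.head? = some x → p x = false) :
    r.takeWhile p = [] := by
  cases r with
  | nil => simp
  | cons x xs => simp [takeWhile_cons, h x rfl]

lemma dw_self (p : Bool → Bool) (r : List Bool) (h : ∀ x, r.head? = some x → p x = false) :
    r.dropWhile p = r := by
  cases r with
  | nil => simp
  | cons x xs => simp [dropWhile_cons, h x rfl]

/-- The canonical computation lemma. -/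
lemma canon (v : List Bool) (a b : ℕ) (hv : v = [] ∨ v.getLast? = some true)
    (ha : 1 ≤ a ∨ v = []) :
    tOnes (v ++ replicate a false ++ replicate b true) = b ∧
    zZeros (v ++ replicate a false ++ replicate b true) = a ∧
    core (v ++ replicate a false ++ replicate b true) = v := by
  have hrev : (v ++ replicate a false ++ replicate b true).reverse
      = replicate b true ++ (replicate a false ++ v.reverse) := by
    simp [reverse_append, reverse_replicate]
  have hhead : ∀ x, (replicate a false ++ v.reverse).head? = some x → (id x : Bool) = false := by
    intro x hx
    rcases ha with ha | rfl
    · rcases Nat.exists_eq_add_of_le ha with ⟨c, hc⟩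
      subst hc
      rw [replicate_add] at hx
      simp [replicate_succ] at hx
      simp [← hx]
    · simp only [reverse_nil, append_nil] at hx
      cases a with
      | zero => simp at hx
      | succ a => simp [replicate_succ] at hx; simp [← hx]
  have hhead2 : ∀ x, v.reverse.head? = some x → ((fun x => !x) x : Bool) = false := by
    intro x hx
    rw [head?_reverse] at hx
    rcases hv with rfl | hv
    · simp at hx
    · rw [hv] at hx
      simp at hx
      simp [← hx]
  have hz2 : zrest (v ++ replicate a false ++ replicate b true)
      = replicate a false ++ v.reverse := by
    rw [zrest, hrev, dw_rep_append id true rfl, dw_self id _ hhead]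
  refine ⟨?_, ?_, ?_⟩
  · rw [tOnes, hrev, tw_rep_append id true rfl, tw_nil id _ hhead]
    simp
  · rw [zZeros, hz2, tw_rep_append _ false rfl, tw_nil _ _ hhead2]
    simp
  · rw [core, hz2, dw_rep_append _ false rfl, dw_self _ _ hhead2, reverse_reverse]

/-- Every word decomposes canonically. -/
lemma decomp (w : List Bool) :
    w = core w ++ replicate (zZeros w) false ++ replicate (tOnes w) true := by
  have e1 : w.reverse.takeWhile id = replicate (tOnes w) true := by
    rw [eq_replicate_iff]
    exact ⟨rfl, fun b hb => by simpa using mem_takeWhile_imp hb⟩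
  have e2 : (zrest w).takeWhile (fun x => !x) = replicate (zZeros w) false := by
    rw [eq_replicate_iff]
    refine ⟨rfl, fun b hb => by simpa using mem_takeWhile_imp hb⟩
  have h1 : w.reverse = replicate (tOnes w) true ++ zrest w := by
    rw [← e1]; exact (takeWhile_append_dropWhile (p := id) (l := w.reverse)).symm
  have h2 : zrest w = replicate (zZeros w) false ++ ((zrest w).dropWhile (fun x => !x)) := by
    conv_lhs => rw [← takeWhile_append_dropWhile (p := fun x => !x) (l := zrest w)]
    rw [e2]
  calc w = w.reverse.reverse := (reverse_reverse w).symm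
  _ = _ := by
      rw [h1, h2]
      simp [reverse_append, reverse_replicate, core]

lemma core_last (w : List Bool) : core w = [] ∨ (core w).getLast? = some true := by
  rcases eq_or_ne ((zrest w).dropWhile (fun x => !x)) [] with h | h
  · left; simp [core, h]
  · right
    rw [core, getLast?_reverse]
    rw [← cons_head_tail h]
    have := head_dropWhile_not (fun x => !x) (l := zrest w) h
    simp only [Bool.not_eq_false'] at this
    simp [this]

lemma dropWhile_id_head_false (l : List Bool) (x : Bool) (xs : List Bool)
    (h : l.dropWhile id = x :: xs) : x = false := by
  induction l with
  | nil => simp at h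
  | cons y ys ih =>
    rw [dropWhile_cons] at h
    cases y with
    | true => exact ih (by simpa using h)
    | false =>
      rw [if_neg (by simp)] at h
      injection h with h1 _
      exact h1.symm

lemma zZeros_eq_zero (w : List Bool) (h : zZeros w = 0) : w = replicate (tOnes w) true := by
  have hz : zrest w = [] := by
    cases hzr : zrest w with
    | nil => rfl
    | cons x xs =>
      exfalso
      have hx : x = false := dropWhile_id_head_false w.reverse x xs hzr
      rw [zZeros, hzr] at h
      simp [takeWhile_cons, hx] at h
  have hd := decomp w
  rw [h] at hd
  simpa [core, hz] using hd

lemma false_mem_of_z_pos (w : List Bool) (h : 1 ≤ zZeros w) : false ∈ w := by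
  rw [decomp w]
  rcases Nat.exists_eq_add_of_le h with ⟨c, hc⟩
  simp [hc, replicate_add, replicate_succ]

lemma ne_rep_true (w : List Bool) (h : 1 ≤ zZeros w) (m : ℕ) : w ≠ replicate m true := by
  intro hw
  have := false_mem_of_z_pos w h
  rw [hw] at this
  simpa using eq_of_mem_replicate this

lemma rep_last (m : ℕ) :
    replicate m true = ([] : List Bool) ∨ (replicate m true).getLast? = some true := by
  cases m with
  | zero => left; rfl
  | succ m => right; simp [getLast?_replicate]

lemma tOnes_rep (m : ℕ) : tOnes (replicate m true) = m := by
  simpa using (canon [] 0 m (Or.inl rfl) (Or.inr rfl)).1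

lemma getLast?_append_rep_succ (l : List Bool) (t : ℕ) :
    (l ++ replicate (t+1) true).getLast? = some true := by
  rw [replicate_succ', ← append_assoc, getLast?_concat]

theorem qdec_iff (q : ℕ) (w : List Bool) :
    QDecreasing q w ↔ (w = replicate (tOnes w) true) ∨
      (1 ≤ zZeros w ∧ tOnes w < q * zZeros w ∧ QDecreasing q (core w)) := by
  constructor
  · intro h
    induction h with
    | ones m => left; rw [tOnes_rep]
    | snoc v a b ha hb hv ih =>
      right
      rcases ih with hveq | ⟨hz1, ht1, hc1⟩
      · have hv' : v = [] ∨ v.getLast? = some true := by rw [hveq]; exact rep_last _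
        obtain ⟨te, ze, ce⟩ := canon v a b hv' (Or.inl ha)
        refine ⟨by omega, by rw [te, ze]; exact hb, by rw [ce, hveq]; exact QDecreasing.ones _⟩
      · cases htv : tOnes v with
        | zero =>
          have hw : v ++ replicate a false ++ replicate b true
              = core v ++ replicate (zZeros v + a) false ++ replicate b true := by
            conv_lhs => rw [decomp v]
            rw [htv]
            simp only [replicate_zero, append_nil, replicate_add, append_assoc]
          rw [hw]
          obtain ⟨te, ze, ce⟩ := canon (core v) (zZeros v + a) b (core_last v)
            (Or.inl (by omega))
          refine ⟨by omega, ?_, by rw [ce]; exact hc1⟩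
          rw [te, ze]
          have : q * a ≤ q * (zZeros v + a) := Nat.mul_le_mul_left _ (by omega)
          omega
        | succ tv =>
          have hv' : v.getLast? = some true := by
            conv_lhs => rw [decomp v, htv]
            exact getLast?_append_rep_succ _ _
          obtain ⟨te, ze, ce⟩ := canon v a b (Or.inr hv') (Or.inl ha)
          exact ⟨by omega, by rw [te, ze]; exact hb, by rw [ce]; exact hv⟩
  · intro h
    rcases h with h | ⟨h1, h2, h3⟩
    · conv => rw [h]
      exact QDecreasing.ones _
    · conv => rw [decomp w]
      exact QDecreasing.snoc _ _ _ h1 h2 h3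

lemma core_rep (m : ℕ) : core (replicate m true) = [] := by
  simpa using (canon [] 0 m (Or.inl rfl) (Or.inr rfl)).2.2

lemma zZeros_rep (m : ℕ) : zZeros (replicate m true) = 0 := by
  simpa using (canon [] 0 m (Or.inl rfl) (Or.inr rfl)).2.1

lemma qdec_core {q : ℕ} {w : List Bool} (h : QDecreasing q w) : QDecreasing q (core w) := by
  rcases (qdec_iff q w).1 h with h1 | ⟨_, _, h3⟩
  · have hc : core w = [] := by
      conv_lhs => rw [h1]
      exact core_rep _
    rw [hc]
    exact QDecreasing.ones 0
  · exact h3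

lemma qdec_append_false {q : ℕ} (hq : 1 ≤ q) (w : List Bool) :
    QDecreasing q (w ++ [false]) ↔ QDecreasing q w := by
  constructor
  · intro h
    rcases (qdec_iff q _).1 h with h1 | ⟨h1, h2, h3⟩
    · exfalso
      have hf : false ∈ w ++ [false] := by simp
      rw [h1] at hf
      simpa using eq_of_mem_replicate hf
    · have ht0 : tOnes (w ++ [false]) = 0 := by
        rw [tOnes]
        simp [reverse_append, takeWhile_cons]
      have hd := decomp (w ++ [false])
      rw [ht0] at hd
      simp only [replicate_zero, append_nil] at hd
      rcases Nat.exists_eq_add_of_le h1 with ⟨c, hc⟩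
      rw [hc, Nat.add_comm 1 c, replicate_succ', ← append_assoc] at hd
      have hw : w = core (w ++ [false]) ++ replicate c false :=
        append_left_injective [false] hd
      cases c with
      | zero => rw [hw]; simpa using h3
      | succ c =>
        rw [hw]
        have := QDecreasing.snoc (core (w ++ [false])) (c+1) 0 (by omega)
          (by positivity) h3
        simpa using this
  · intro h
    have := QDecreasing.snoc w 1 0 one_pos (by omega) h
    simpa using this

lemma tOnes_append_true (w : List Bool) : tOnes (w ++ [true]) = tOnes w + 1 := by
  rw [tOnes, tOnes]
  simp [reverse_append, takeWhile_cons]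

lemma zrest_append_true (w : List Bool) : zrest (w ++ [true]) = zrest w := by
  rw [zrest, zrest]
  simp [reverse_append, dropWhile_cons]

lemma zZeros_append_true (w : List Bool) : zZeros (w ++ [true]) = zZeros w := by
  rw [zZeros, zZeros, zrest_append_true]

lemma core_append_true (w : List Bool) : core (w ++ [true]) = core w := by
  rw [core, core, zrest_append_true]

lemma qdec_drop_true {q : ℕ} {w : List Bool} (h : QDecreasing q (w ++ [true])) :
    QDecreasing q w := by
  rcases (qdec_iff q _).1 h with h1 | ⟨h1, h2, h3⟩
  · rw [tOnes_append_true, replicate_succ'] at h1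
    exact (qdec_iff q w).2 (Or.inl (append_left_injective [true] h1))
  · rw [zZeros_append_true] at h1
    rw [tOnes_append_true, zZeros_append_true] at h2
    rw [core_append_true] at h3
    exact (qdec_iff q w).2 (Or.inr ⟨h1, by omega, h3⟩)

lemma sat_iff {q : ℕ} {w : List Bool} (hw : QDecreasing q w) :
    ¬ QDecreasing q (w ++ [true]) ↔
      (1 ≤ zZeros w ∧ tOnes w + 1 = q * zZeros w) := by
  rcases (qdec_iff q w).1 hw with h1 | ⟨h1, h2, h3⟩
  · have hz : zZeros w = 0 := by
      conv_lhs => rw [h1]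
      exact zZeros_rep _
    have hqd : QDecreasing q (w ++ [true]) := by
      rw [h1, ← replicate_succ']
      exact QDecreasing.ones _
    simp [hqd, hz]
  · have hne : ¬ (w ++ [true] = replicate (tOnes w + 1) true) := by
      intro hcon
      have hf : false ∈ w ++ [true] := by
        have := false_mem_of_z_pos w h1
        simp [this]
      rw [hcon] at hf
      simpa using eq_of_mem_replicate hf
    have hiff : QDecreasing q (w ++ [true]) ↔ tOnes w + 1 < q * zZeros w := by
      rw [qdec_iff q (w ++ [true])]
      simp only [tOnes_append_true, zZeros_append_true, core_append_true]
      constructor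
      · rintro (hcon | ⟨_, hlt, _⟩)
        · exact absurd hcon hne
        · exact hlt
      · intro hlt
        exact Or.inr ⟨h1, hlt, h3⟩
    rw [hiff]
    omega

open Set

def A (q n k : ℕ) : Set (List Bool) :=
  {w | w.length = n ∧ w.count true = k ∧ QDecreasing q w}

def G (q n k : ℕ) : Set (List Bool) :=
  {w | w ∈ A q n k ∧ QDecreasing q (w ++ [true])}

def St (q n k : ℕ) : Set (List Bool) :=
  {w | w ∈ A q n k ∧ ¬ QDecreasing q (w ++ [true])}

lemma A_finite (q n k : ℕ) : (A q n k).Finite :=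
  (List.finite_length_eq Bool n).subset (fun _ hw => hw.1)

lemma G_finite (q n k : ℕ) : (G q n k).Finite :=
  (A_finite q n k).subset (fun _ hw => hw.1)

lemma St_finite (q n k : ℕ) : (St q n k).Finite :=
  (A_finite q n k).subset (fun _ hw => hw.1)

noncomputable def f (q n k : ℕ) : ℕ := (A q n k).ncard
noncomputable def g (q n k : ℕ) : ℕ := (G q n k).ncard
noncomputable def s (q n k : ℕ) : ℕ := (St q n k).ncard

lemma f_zero_zero (q : ℕ) : f q 0 0 = 1 := by
  have : A q 0 0 = {[]} := by
    ext w
    constructor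
    · rintro ⟨h1, -, -⟩
      exact mem_singleton_iff.2 (length_eq_zero_iff.1 h1)
    · rintro rfl
      exact ⟨rfl, rfl, QDecreasing.ones 0⟩
  rw [f, this, ncard_singleton]

lemma f_of_gt (q n k : ℕ) (h : n < k) : f q n k = 0 := by
  have : A q n k = ∅ := by
    ext w
    simp only [A, mem_setOf_eq, mem_empty_iff_false, iff_false]
    rintro ⟨h1, h2, -⟩
    have := w.count_le_length (a := true)
    omega
  rw [f, this, ncard_empty]

lemma f_zero_right (q n : ℕ) (hq : 1 ≤ q) : f q n 0 = 1 := by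
  have : A q n 0 = {replicate n false} := by
    ext w
    constructor
    · rintro ⟨h1, h2, -⟩
      rw [mem_singleton_iff, eq_replicate_iff]
      refine ⟨h1, fun b hb => ?_⟩
      cases b
      · rfl
      · exfalso
        rw [count_eq_zero] at h2
        exact h2 hb
    · rintro rfl
      refine ⟨by simp, by simp [count_replicate], ?_⟩
      cases n with
      | zero => exact QDecreasing.ones 0
      | succ n =>
        have := QDecreasing.snoc [] (n+1) 0 (by omega) (by positivity) (QDecreasing.ones 0)
        simpa using this
  rw [f, this, ncard_singleton]

lemma A_split (q : ℕ) (hq : 1 ≤ q) (n k : ℕ) :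
    A q (n+1) (k+1) = ((· ++ [false]) '' A q n (k+1)) ∪ ((· ++ [true]) '' G q n k) := by
  ext w
  constructor
  · rintro ⟨hl, hc, hd⟩
    have hne : w ≠ [] := by
      intro h; rw [h] at hl; simp at hl
    have hw : w.dropLast ++ [w.getLast hne] = w := dropLast_append_getLast hne
    have hlu : w.dropLast.length = n := by
      rw [length_dropLast, hl]
      omega
    cases hx : w.getLast hne with
    | false =>
      left
      rw [hx] at hw
      refine ⟨w.dropLast, ⟨hlu, ?_, ?_⟩, hw⟩
      · have hcw := congrArg (count true) hw
        simp [count_append, hc] at hcw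
        omega
      · exact (qdec_append_false hq _).1 (by rw [hw]; exact hd)
    | true =>
      right
      rw [hx] at hw
      have hqd : QDecreasing q (w.dropLast ++ [true]) := by rw [hw]; exact hd
      refine ⟨w.dropLast, ⟨⟨hlu, ?_, qdec_drop_true hqd⟩, hqd⟩, hw⟩
      · have hcw := congrArg (count true) hw
        simp [count_append, hc] at hcw
        omega
  · rintro (⟨u, ⟨h1, h2, h3⟩, rfl⟩ | ⟨u, ⟨⟨h1, h2, h3⟩, h4⟩, rfl⟩)
    · exact ⟨by simp [h1], by simp [count_append, h2], (qdec_append_false hq u).2 h3⟩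
    · exact ⟨by simp [h1], by simp [count_append, h2], h4⟩

lemma GS_split (q n k : ℕ) : A q n k = G q n k ∪ St q n k := by
  ext w
  simp only [G, St, mem_union, mem_setOf_eq]
  by_cases h : QDecreasing q (w ++ [true]) <;> tauto

lemma g_add_s (q n k : ℕ) : g q n k + s q n k = f q n k := by
  rw [g, s, f, GS_split q n k, ncard_union_eq _ (G_finite q n k) (St_finite q n k)]
  rw [Set.disjoint_left]
  rintro w ⟨-, h1⟩ ⟨-, h2⟩
  exact h2 h1

lemma M (q : ℕ) (hq : 1 ≤ q) (n k : ℕ) :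
    f q (n+1) (k+1) + s q n k = f q n (k+1) + f q n k := by
  have key : f q (n+1) (k+1) = f q n (k+1) + g q n k := by
    rw [f, A_split q hq n k, ncard_union_eq _ ((A_finite q n (k+1)).image _)
      ((G_finite q n k).image _), ncard_image_of_injective _ (append_left_injective [false]),
      ncard_image_of_injective _ (append_left_injective [true])]
    · rfl
    · rw [Set.disjoint_left]
      rintro w ⟨u, -, hu⟩ ⟨v, -, hv⟩
      simp only at hu hv
      have e1 : w.getLast? = some false := by rw [← hu]; exact getLast?_concat (l := u)
      have e2 : w.getLast? = some true := by rw [← hv]; exact getLast?_concat (l := v)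
      rw [e1] at e2
      simp at e2
  have := g_add_s q n k
  omega

lemma mem_St (q m j : ℕ) (w : List Bool) :
    w ∈ St q m j ↔ w.length = m ∧ count true w = j ∧ QDecreasing q w ∧
      1 ≤ zZeros w ∧ tOnes w + 1 = q * zZeros w := by
  simp only [St, A, mem_setOf_eq]
  constructor
  · rintro ⟨⟨h1, h2, h3⟩, h4⟩
    exact ⟨h1, h2, h3, ((sat_iff h3).1 h4).1, ((sat_iff h3).1 h4).2⟩
  · rintro ⟨h1, h2, h3, h4, h5⟩
    exact ⟨⟨h1, h2, h3⟩, (sat_iff h3).2 ⟨h4, h5⟩⟩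

lemma len_decomp (w : List Bool) :
    w.length = (core w).length + zZeros w + tOnes w := by
  conv_lhs => rw [decomp w]
  simp
  omega

lemma count_decomp (w : List Bool) :
    count true w = count true (core w) + tOnes w := by
  conv_lhs => rw [decomp w]
  simp [count_append, count_replicate]

lemma true_count_pos (v : List Bool) (hv : v.getLast? = some true) : 1 ≤ count true v := by
  rcases eq_or_ne v [] with rfl | hne
  · simp at hv
  · rw [List.getLast?_eq_getLast hne] at hv
    have : true ∈ v := by
      have := List.getLast_mem hne
      rwa [Option.some_inj.1 hv] at this
    exact List.count_pos_iff.2 this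

def phi (q : ℕ) (v : List Bool) : List Bool := v ++ true :: false :: replicate (q-1) true

def psi (q : ℕ) (w : List Bool) : List Bool :=
  core w ++ replicate (zZeros w + 1) false ++ replicate (tOnes w + q) true

lemma phi_eq (q : ℕ) (v : List Bool) :
    phi q v = (v ++ [true]) ++ replicate 1 false ++ replicate (q-1) true := by
  simp [phi]

lemma St_split (q : ℕ) (hq : 1 ≤ q) (n k : ℕ) :
    St q (n+q+1) (k+q) = (phi q '' G q n k) ∪ (psi q '' St q n k) := by
  ext w
  constructor
  · intro hw
    obtain ⟨hl, hc, hd, hz, ht⟩ := (mem_St q _ _ w).1 hw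
    have hd' : QDecreasing q (core w) := qdec_core hd
    have hlen := len_decomp w
    have hcnt := count_decomp w
    rcases Nat.exists_eq_add_of_le hz with ⟨zz, hzz⟩
    cases zz with
    | zero =>
      -- z = 1, t = q - 1
      left
      have hz1 : zZeros w = 1 := by omega
      rw [hz1, Nat.mul_one] at ht
      have htq : tOnes w = q - 1 := by omega
      have hvlen : (core w).length = n + 1 := by rw [hz1] at hlen; omega
      have hvne : core w ≠ [] := by
        intro hcon; rw [hcon] at hvlen; simp at hvlen
      have hvlast : (core w).getLast? = some true := by
        rcases core_last w with h | h
        · exact absurd h hvne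
        · exact h
      have hgl : (core w).getLast hvne = true := by
        have h0 := List.getLast?_eq_getLast hvne
        rw [h0] at hvlast
        exact Option.some_inj.1 hvlast
      have hsplit : (core w).dropLast ++ [true] = core w := by
        conv_rhs => rw [← dropLast_append_getLast hvne]
        rw [hgl]
      have hcnt2 : count true (core w).dropLast + 1 = count true (core w) := by
        have h0 := congrArg (count true) hsplit
        simpa [count_append] using h0
      refine ⟨(core w).dropLast, ⟨⟨?_, ?_, ?_⟩, ?_⟩, ?_⟩
      · rw [length_dropLast, hvlen]; omega
      · omega
      · exact qdec_drop_true (by rw [hsplit]; exact hd')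
      · rw [hsplit]; exact hd'
      · rw [phi_eq, hsplit]
        conv_rhs => rw [decomp w]
        rw [hz1, htq]
    | succ zz =>
      -- z = zz + 2
      right
      have hz2 : zZeros w = zz + 2 := by omega
      rw [hz2] at ht
      have hmul1 : q * (zz + 2) = q * zz + q + q := by ring
      have hmul2 : q * (zz + 1) = q * zz + q := by ring
      rw [hmul1] at ht
      have htb : q ≤ tOnes w := by omega
      obtain ⟨te, ze, ce⟩ := canon (core w) (zz+1) (tOnes w - q) (core_last w)
        (Or.inl (by omega))
      refine ⟨core w ++ replicate (zz+1) false ++ replicate (tOnes w - q) true,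
        (mem_St q n k _).2 ⟨?_, ?_, ?_, ?_, ?_⟩, ?_⟩
      · simp only [length_append, length_replicate]
        rw [hz2] at hlen; omega
      · simp [count_append, count_replicate]
        omega
      · exact QDecreasing.snoc _ _ _ (by omega) (by omega) hd'
      · rw [ze]; omega
      · rw [te, ze, hmul2]; omega
      · simp only [psi]
        rw [ce, ze, te]
        rw [show zz + 1 + 1 = zZeros w from by omega,
          show tOnes w - q + q = tOnes w from by omega]
        exact (decomp w).symm
  · rintro (⟨u, ⟨⟨h1, h2, h3⟩, h4⟩, rfl⟩ | ⟨w0, hw0, rfl⟩)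
    · rw [phi_eq]
      obtain ⟨te, ze, ce⟩ := canon (u ++ [true]) 1 (q-1) (Or.inr (getLast?_concat (l := u)))
        (Or.inl le_rfl)
      refine (mem_St q _ _ _).2 ⟨?_, ?_, ?_, ?_, ?_⟩
      · simp only [length_append, length_replicate, length_cons, length_nil]
        rw [h1]; omega
      · simp [count_append, count_replicate, h2]
        omega
      · exact QDecreasing.snoc _ _ _ one_pos (by omega) h4
      · rw [ze]
      · rw [te, ze]; omega
    · obtain ⟨h1, h2, h3, h4, h5⟩ := (mem_St q n k w0).1 hw0
      obtain ⟨te, ze, ce⟩ := canon (core w0) (zZeros w0 + 1) (tOnes w0 + q) (core_last w0)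
        (Or.inl (by omega))
      have hlen0 := len_decomp w0
      have hcnt0 := count_decomp w0
      have hmul2 : q * (zZeros w0 + 1) = q * zZeros w0 + q := by ring
      refine (mem_St q _ _ _).2 ⟨?_, ?_, ?_, ?_, ?_⟩
      · simp only [psi, length_append, length_replicate]
        omega
      · simp only [psi]
        simp [count_append, count_replicate]
        omega
      · exact QDecreasing.snoc _ _ _ (by omega) (by omega) (qdec_core h3)
      · simp only [psi]
        rw [ze]; omega
      · simp only [psi]
        rw [ze, te, hmul2]; omega

lemma zZeros_phi (q : ℕ) (u : List Bool) : zZeros (phi q u) = 1 := by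
  rw [phi_eq]
  exact (canon (u ++ [true]) 1 (q-1) (Or.inr (getLast?_concat (l := u))) (Or.inl le_rfl)).2.1

lemma core_psi (q : ℕ) (w : List Bool) : core (psi q w) = core w := by
  simp only [psi]
  exact (canon _ _ _ (core_last w) (Or.inl (by omega))).2.2

lemma zZeros_psi (q : ℕ) (w : List Bool) : zZeros (psi q w) = zZeros w + 1 := by
  simp only [psi]
  exact (canon _ _ _ (core_last w) (Or.inl (by omega))).2.1

lemma tOnes_psi (q : ℕ) (w : List Bool) : tOnes (psi q w) = tOnes w + q := by
  simp only [psi]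
  exact (canon _ _ _ (core_last w) (Or.inl (by omega))).1

lemma phi_inj (q : ℕ) : Function.Injective (phi q) :=
  fun _ _ h => append_left_injective (true :: false :: replicate (q-1) true) h

lemma psi_inj (q : ℕ) : Function.Injective (psi q) := by
  intro w1 w2 h
  have e1 := congrArg core h
  rw [core_psi, core_psi] at e1
  have e2 := congrArg zZeros h
  rw [zZeros_psi, zZeros_psi] at e2
  have e3 := congrArg tOnes h
  rw [tOnes_psi, tOnes_psi] at e3
  rw [decomp w1, decomp w2, e1, show zZeros w1 = zZeros w2 from by omega,
    show tOnes w1 = tOnes w2 from by omega]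

lemma M2a (q : ℕ) (hq : 1 ≤ q) (n k : ℕ) : s q (n+q+1) (k+q) = f q n k := by
  have hdis : Disjoint (phi q '' G q n k) (psi q '' St q n k) := by
    rw [Set.disjoint_left]
    rintro w ⟨u, -, hu⟩ ⟨w0, hw0, hv⟩
    have e1 : zZeros w = 1 := by rw [← hu]; exact zZeros_phi q u
    have e2 : zZeros w = zZeros w0 + 1 := by rw [← hv]; exact zZeros_psi q w0
    have e3 : 1 ≤ zZeros w0 := ((mem_St q n k w0).1 hw0).2.2.2.1
    omega
  rw [s, St_split q hq n k,
    ncard_union_eq hdis ((G_finite q n k).image _) ((St_finite q n k).image _),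
    ncard_image_of_injective _ (phi_inj q),
    ncard_image_of_injective _ (psi_inj q)]
  exact g_add_s q n k

lemma M2b (q : ℕ) (hq : 1 ≤ q) : s q q (q-1) = 1 := by
  have hset : St q q (q-1) = {false :: replicate (q-1) true} := by
    ext w
    constructor
    · intro hw
      obtain ⟨hl, hc, hd, hz, ht⟩ := (mem_St q _ _ w).1 hw
      have hlen := len_decomp w
      have hcnt := count_decomp w
      have hz1 : zZeros w = 1 := by
        by_contra hcon
        have h2z : 2 ≤ zZeros w := by omega
        have := Nat.mul_le_mul_left q h2z
        omega
      rw [hz1, Nat.mul_one] at ht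
      have hv0 : (core w).length = 0 := by omega
      have hv : core w = [] := length_eq_zero_iff.1 hv0
      have : w = false :: replicate (q-1) true := by
        conv_lhs => rw [decomp w]
        rw [hv, hz1, show tOnes w = q - 1 from by omega]
        simp
      simpa using this
    · intro hw
      rw [mem_singleton_iff] at hw
      subst hw
      have heq : (false :: replicate (q-1) true : List Bool)
          = [] ++ replicate 1 false ++ replicate (q-1) true := by simp
      obtain ⟨te, ze, ce⟩ := canon [] 1 (q-1) (Or.inl rfl) (Or.inl le_rfl)
      rw [heq]
      refine (mem_St q _ _ _).2 ⟨?_, ?_, ?_, ?_, ?_⟩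
      · simp only [length_append, length_replicate, length_nil]
        omega
      · simp [count_append, count_replicate]
      · exact QDecreasing.snoc [] 1 (q-1) one_pos (by omega) (QDecreasing.ones 0)
      · rw [ze]
      · rw [te, ze]; omega
  rw [s, hset, ncard_singleton]

lemma M2c (q : ℕ) (hq : 1 ≤ q) (m j : ℕ) (h1 : ¬(m = q ∧ j = q-1))
    (h2 : ¬(q+1 ≤ m ∧ q ≤ j)) : s q m j = 0 := by
  have hset : St q m j = ∅ := by
    ext w
    simp only [mem_empty_iff_false, iff_false]
    intro hw
    obtain ⟨hl, hc, hd, hz, ht⟩ := (mem_St q _ _ w).1 hw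
    have hlen := len_decomp w
    have hcnt := count_decomp w
    rcases Nat.lt_or_ge (zZeros w) 2 with hzlt | hzge
    · have hz1 : zZeros w = 1 := by omega
      rw [hz1, Nat.mul_one] at ht
      rcases eq_or_ne (core w) [] with hv | hv
      · apply h1
        rw [hv] at hlen hcnt
        simp at hlen hcnt
        omega
      · apply h2
        have hvl : 1 ≤ (core w).length := by
          rcases Nat.eq_zero_or_pos (core w).length with h0 | h0
          · exact absurd (length_eq_zero_iff.1 h0) hv
          · exact h0
        have hvlast : (core w).getLast? = some true := by
          rcases core_last w with h | h
          · exact absurd h hv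
          · exact h
        have hvc := true_count_pos (core w) hvlast
        omega
    · exfalso
      have := Nat.mul_le_mul_left q hzge
      apply h2
      omega
  rw [s, hset, ncard_empty]

lemma master (q : ℕ) (hq : 1 ≤ q) (n k : ℕ) :
    (f q n k : ℤ)
      - (if 1 ≤ n ∧ 1 ≤ k then (f q (n-1) (k-1) : ℤ) else 0)
      - (if 1 ≤ n then (f q (n-1) k : ℤ) else 0)
      + (if q+2 ≤ n ∧ q+1 ≤ k then (f q (n-q-2) (k-q-1) : ℤ) else 0)
    = (if n = 0 ∧ k = 0 then 1 else 0) - (if n = q+1 ∧ k = q then 1 else 0) := by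
  match n, k with
  | 0, 0 =>
    rw [if_neg (by omega : ¬(1 ≤ 0 ∧ 1 ≤ 0)), if_neg (by omega : ¬(1 ≤ 0)),
      if_neg (by omega : ¬(q+2 ≤ 0 ∧ q+1 ≤ 0)), if_pos ⟨rfl, rfl⟩,
      if_neg (by omega : ¬((0:ℕ) = q+1 ∧ (0:ℕ) = q)), f_zero_zero q]
    norm_num
  | 0, k+1 =>
    rw [if_neg (by omega : ¬(1 ≤ 0 ∧ 1 ≤ k+1)), if_neg (by omega : ¬(1 ≤ 0)),
      if_neg (by omega : ¬(q+2 ≤ 0 ∧ q+1 ≤ k+1)), if_neg (by omega : ¬((0:ℕ) = 0 ∧ k+1 = 0)),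
      if_neg (by omega : ¬((0:ℕ) = q+1 ∧ k+1 = q)), f_of_gt q 0 (k+1) (by omega)]
    norm_num
  | n+1, 0 =>
    rw [if_neg (by omega : ¬(1 ≤ n+1 ∧ 1 ≤ 0)), if_pos (by omega : 1 ≤ n+1),
      if_neg (by omega : ¬(q+2 ≤ n+1 ∧ q+1 ≤ 0)), if_neg (by omega : ¬(n+1 = 0 ∧ (0:ℕ) = 0)),
      if_neg (by omega : ¬(n+1 = q+1 ∧ (0:ℕ) = q)),
      f_zero_right q (n+1) hq, show n+1-1 = n from by omega, f_zero_right q n hq]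
    norm_num
  | n+1, k+1 =>
    have hM := M q hq n k
    rw [if_pos ⟨by omega, by omega⟩, if_pos (by omega : 1 ≤ n+1),
      show n+1-1 = n from by omega, show k+1-1 = k from by omega,
      if_neg (by omega : ¬(n+1 = 0 ∧ k+1 = 0))]
    by_cases c1 : q+1 ≤ n ∧ q ≤ k
    · have hs := M2a q hq (n-q-1) (k-q)
      rw [show n-q-1+q+1 = n from by omega, show k-q+q = k from by omega] at hs
      rw [if_pos ⟨by omega, by omega⟩,
        show n+1-q-2 = n-q-1 from by omega, show k+1-q-1 = k-q from by omega,
        if_neg (by omega : ¬(n+1 = q+1 ∧ k+1 = q))]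
      push_cast
      omega
    · by_cases c2 : n = q ∧ k = q - 1
      · obtain ⟨hn, hk⟩ := c2
        have hs : s q n k = 1 := by rw [hn, hk]; exact M2b q hq
        rw [if_neg (by omega : ¬(q+2 ≤ n+1 ∧ q+1 ≤ k+1)),
          if_pos ⟨by omega, by omega⟩]
        push_cast
        omega
      · have hs : s q n k = 0 := M2c q hq n k c2 c1
        rw [if_neg (fun hcon => c1 ⟨by omega, by omega⟩ : ¬(q+2 ≤ n+1 ∧ q+1 ≤ k+1)),
          if_neg (fun hcon => c2 ⟨by omega, by omega⟩ : ¬(n+1 = q+1 ∧ k+1 = q))]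
        push_cast
        omega

end QDecAux

lemma coeff_mul_XY (F : MvPowerSeries (Fin 2) ℤ) (i j : ℕ) (d : Fin 2 →₀ ℕ) :
    (MvPowerSeries.coeff d) (F * (MvPowerSeries.X 0 ^ i * MvPowerSeries.X 1 ^ j)) =
      if i ≤ d 0 ∧ j ≤ d 1 then
        (MvPowerSeries.coeff (d - (Finsupp.single 0 i + Finsupp.single 1 j))) F else 0 := by
  classical
  rw [MvPowerSeries.X_pow_eq, MvPowerSeries.X_pow_eq, MvPowerSeries.monomial_mul_monomial,
    MvPowerSeries.coeff_mul_monomial]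
  have hle : (Finsupp.single (0 : Fin 2) i + Finsupp.single 1 j ≤ d) ↔ (i ≤ d 0 ∧ j ≤ d 1) := by
    rw [Finsupp.le_def, Fin.forall_fin_two]
    simp [Finsupp.add_apply, Finsupp.single_apply]
  simp only [mul_one]
  exact if_congr hle rfl rfl

theorem qdecreasing_bivariate_gf (q : ℕ) (hq : 1 ≤ q) :
    mkSeries (fun n k =>
        (Nat.card {w : List Bool // w.length = n ∧ w.count true = k ∧ QDecreasing q w} : ℤ)) *
      (1 - Xv * Yv - Xv + Xv ^ (q + 2) * Yv ^ (q + 1)) =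
    1 - Xv ^ (q + 1) * Yv ^ q := by
  classical
  have hfun : (fun n k =>
      (Nat.card {w : List Bool // w.length = n ∧ w.count true = k ∧ QDecreasing q w} : ℤ))
      = fun n k => (QDecAux.f q n k : ℤ) := by
    funext n k
    have hnk : Nat.card {w : List Bool // w.length = n ∧ w.count true = k ∧ QDecreasing q w}
        = QDecAux.f q n k :=
      calc Nat.card {w : List Bool // w.length = n ∧ w.count true = k ∧ QDecreasing q w}
        = Nat.card ↥(QDecAux.A q n k) :=
          Nat.card_congr (Equiv.subtypeEquivRight fun w => Iff.rfl)
        _ = (QDecAux.A q n k).ncard := Nat.card_coe_set_eq _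
        _ = QDecAux.f q n k := rfl
    rw [hnk]
  rw [hfun]
  set F := mkSeries (fun n k => (QDecAux.f q n k : ℤ)) with hF
  have expand : F * (1 - Xv * Yv - Xv + Xv ^ (q+2) * Yv ^ (q+1))
      = F - F * (Xv * Yv) - F * Xv + F * (Xv ^ (q+2) * Yv ^ (q+1)) := by ring
  apply MvPowerSeries.ext
  intro d
  rw [expand]
  simp only [map_sub, map_add]
  have hcF : ∀ e : Fin 2 →₀ ℕ, (MvPowerSeries.coeff e) F = (QDecAux.f q (e 0) (e 1) : ℤ) :=
    fun e => rfl
  have hx1 : F * Xv = F * (MvPowerSeries.X 0 ^ 1 * MvPowerSeries.X 1 ^ 0) := by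
    rw [pow_one, pow_zero, mul_one]; rfl
  have hxy : F * (Xv * Yv) = F * (MvPowerSeries.X 0 ^ 1 * MvPowerSeries.X 1 ^ 1) := by
    rw [pow_one, pow_one]; rfl
  have hxyq : F * (Xv ^ (q+2) * Yv ^ (q+1))
      = F * (MvPowerSeries.X 0 ^ (q+2) * MvPowerSeries.X 1 ^ (q+1)) := rfl
  rw [hx1, hxy, hxyq, coeff_mul_XY, coeff_mul_XY, coeff_mul_XY]
  have hsub0 : ∀ i j : ℕ,
      ((d - (Finsupp.single (0 : Fin 2) i + Finsupp.single (1 : Fin 2) j)) : Fin 2 →₀ ℕ) 0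
        = d 0 - i := by
    intro i j
    rw [Finsupp.tsub_apply, Finsupp.add_apply]
    simp [Finsupp.single_apply]
  have hsub1 : ∀ i j : ℕ,
      ((d - (Finsupp.single (0 : Fin 2) i + Finsupp.single (1 : Fin 2) j)) : Fin 2 →₀ ℕ) 1
        = d 1 - j := by
    intro i j
    rw [Finsupp.tsub_apply, Finsupp.add_apply]
    simp [Finsupp.single_apply]
  have hdeq : ∀ i j : ℕ,
      (d = Finsupp.single 0 i + Finsupp.single 1 j) ↔ (d 0 = i ∧ d 1 = j) := by
    intro i j
    rw [Finsupp.ext_iff, Fin.forall_fin_two]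
    simp [Finsupp.add_apply, Finsupp.single_apply]
  have hd0 : (d = 0) ↔ (d 0 = 0 ∧ d 1 = 0) := by
    rw [Finsupp.ext_iff, Fin.forall_fin_two]
    simp
  rw [MvPowerSeries.coeff_one]
  have hrhs2 : (MvPowerSeries.coeff d) (Xv ^ (q+1) * Yv ^ q)
      = if d 0 = q+1 ∧ d 1 = q then 1 else 0 := by
    show (MvPowerSeries.coeff d) (MvPowerSeries.X 0 ^ (q+1) * MvPowerSeries.X 1 ^ q) = _
    rw [MvPowerSeries.X_pow_eq, MvPowerSeries.X_pow_eq, MvPowerSeries.monomial_mul_monomial,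
      MvPowerSeries.coeff_monomial, mul_one]
    exact if_congr (hdeq (q+1) q) rfl rfl
  rw [hrhs2]
  simp only [hcF, hsub0, hsub1]
  rw [if_congr hd0 rfl rfl]
  have hm := QDecAux.master q hq (d 0) (d 1)
  simp only [Nat.zero_le, and_true, Nat.sub_zero] at *
  rw [show d 0 - (q+2) = d 0 - q - 2 from by omega, show d 1 - (q+1) = d 1 - q - 1 from by omega]
  exact hm
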